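/- Let α > 1/2 and c > 0. For every λ > −(α+1)c^α the improper Riemann integral lim_{R→∞} ∫_{c}^{R} ξ^{1/2} e^{i(λξ + ξ^{α+1})} dξ exists, and it defines a continuous function of λ on the set {λ ∈ ℝ : λ > −(α+1)c^α}. -/

import Mathlib

open MeasureTheory Filter Set

namespace OscTailAux

noncomputable def phi (α l ξ : ℝ) : ℝ := l * ξ + ξ ^ (α + 1)

noncomputable def qd (α l ξ : ℝ) : ℝ := l + (α + 1) * ξ ^ α

noncomputable def rr (α l ξ : ℝ) : ℝ :=
  (2⁻¹ * ξ ^ ((2⁻¹ : ℝ) - 1) * qd α l ξ -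
      ξ ^ (2⁻¹ : ℝ) * ((α + 1) * (α * ξ ^ (α - 1)))) / (qd α l ξ) ^ 2

noncomputable def psi (α l ξ : ℝ) : ℂ :=
  -Complex.I * (rr α l ξ : ℂ) * Complex.exp (Complex.I * (phi α l ξ : ℂ))

noncomputable def G (α l ξ : ℝ) : ℂ :=
  -Complex.I * ((ξ ^ (2⁻¹ : ℝ) / qd α l ξ : ℝ) : ℂ) *
    Complex.exp (Complex.I * (phi α l ξ : ℂ))

noncomputable def f (α l ξ : ℝ) : ℂ :=
  ((ξ ^ (2⁻¹ : ℝ) : ℝ) : ℂ) *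
    Complex.exp (Complex.I * ((l * ξ + ξ ^ (α + 1) : ℝ) : ℂ))

noncomputable def Kc (α c L : ℝ) : ℝ := min ((L + (α + 1) * c ^ α) / c ^ α) (α + 1)

noncomputable def Cb (α c L : ℝ) : ℝ := 2⁻¹ / Kc α c L + (α + 1) * α / (Kc α c L) ^ 2

lemma Kc_pos {α c L : ℝ} (hα : 0 < α) (hc : 0 < c) (hL : -(α + 1) * c ^ α < L) :
    0 < Kc α c L := by
  have hcα : 0 < c ^ α := Real.rpow_pos_of_pos hc α
  have h1 : 0 < L + (α + 1) * c ^ α := by nlinarith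
  exact lt_min (div_pos h1 hcα) (by linarith)

lemma qd_ge {α c L : ℝ} (hα : 0 < α) (hc : 0 < c) (hL : -(α + 1) * c ^ α < L)
    {l ξ : ℝ} (hl : L ≤ l) (hξ : c ≤ ξ) :
    Kc α c L * ξ ^ α ≤ qd α l ξ := by
  have hcα : 0 < c ^ α := Real.rpow_pos_of_pos hc α
  have hmono : c ^ α ≤ ξ ^ α := Real.rpow_le_rpow hc.le hξ hα.le
  have hK1 : Kc α c L ≤ (L + (α + 1) * c ^ α) / c ^ α := min_le_left _ _
  have hK2 : Kc α c L ≤ α + 1 := min_le_right _ _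
  have h1 : Kc α c L * c ^ α ≤ L + (α + 1) * c ^ α :=
    (le_div_iff₀ hcα).mp hK1
  -- (Kc - (α+1)) * ξ^α ≤ (Kc - (α+1)) * c^α ≤ L ≤ l
  have h2 : (Kc α c L - (α + 1)) * ξ ^ α ≤ (Kc α c L - (α + 1)) * c ^ α :=
    mul_le_mul_of_nonpos_left hmono (by linarith)
  unfold qd
  nlinarith

lemma qd_pos {α c : ℝ} (hα : 0 < α) (hc : 0 < c)
    {l ξ : ℝ} (hl : -(α + 1) * c ^ α < l) (hξ : c ≤ ξ) :
    0 < qd α l ξ := by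
  have h := qd_ge hα hc hl (le_refl l) hξ
  have := mul_pos (Kc_pos hα hc hl) (Real.rpow_pos_of_pos (hc.trans_le hξ) α)
  linarith

lemma norm_psi (α l ξ : ℝ) : ‖psi α l ξ‖ = |rr α l ξ| := by
  simp [psi, map_mul, Complex.norm_exp, Complex.norm_real,
    Complex.mul_re, Complex.I_re, Complex.I_im]

lemma norm_G (α l ξ : ℝ) : ‖G α l ξ‖ = |ξ ^ (2⁻¹ : ℝ) / qd α l ξ| := by
  simp [G, map_mul, Complex.norm_exp, Complex.norm_real,
    Complex.mul_re, Complex.I_re, Complex.I_im, abs_div]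

lemma psi_bound {α c : ℝ} (hα : 0 < α) (hc : 0 < c) {L : ℝ}
    (hL : -(α + 1) * c ^ α < L) {l ξ : ℝ} (hl : L ≤ l) (hξ : c ≤ ξ) :
    ‖psi α l ξ‖ ≤ Cb α c L * ξ ^ ((2⁻¹ : ℝ) - 1 - α) := by
  set K := Kc α c L with hKdef
  have hK : 0 < K := Kc_pos hα hc hL
  have hξ0 : 0 < ξ := hc.trans_le hξ
  have hξα : 0 < ξ ^ α := Real.rpow_pos_of_pos hξ0 α
  have hqge : K * ξ ^ α ≤ qd α l ξ := qd_ge hα hc hL hl hξ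
  have hq : 0 < qd α l ξ := lt_of_lt_of_le (mul_pos hK hξα) hqge
  rw [norm_psi]
  have h1 : 0 ≤ 2⁻¹ * ξ ^ ((2⁻¹ : ℝ) - 1) * qd α l ξ := by
    have : (0:ℝ) ≤ ξ ^ ((2⁻¹ : ℝ) - 1) := (Real.rpow_pos_of_pos hξ0 _).le
    positivity
  have h2 : 0 ≤ ξ ^ (2⁻¹ : ℝ) * ((α + 1) * (α * ξ ^ (α - 1))) := by
    have h3 : (0:ℝ) ≤ ξ ^ (2⁻¹ : ℝ) := (Real.rpow_pos_of_pos hξ0 _).le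
    have h4 : (0:ℝ) ≤ ξ ^ (α - 1) := (Real.rpow_pos_of_pos hξ0 _).le
    positivity
  have habs : |rr α l ξ| ≤
      (2⁻¹ * ξ ^ ((2⁻¹ : ℝ) - 1) * qd α l ξ +
        ξ ^ (2⁻¹ : ℝ) * ((α + 1) * (α * ξ ^ (α - 1)))) / (qd α l ξ) ^ 2 := by
    unfold rr
    rw [abs_div, abs_of_nonneg (by positivity : (0:ℝ) ≤ (qd α l ξ) ^ 2)]
    gcongr
    exact (abs_sub _ _).trans (by rw [abs_of_nonneg h1, abs_of_nonneg h2])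
  refine habs.trans ?_
  have hKξ : 0 < K * ξ ^ α := mul_pos hK hξα
  set A := ξ ^ ((2⁻¹ : ℝ) - 1 - α) with hA
  have hA0 : 0 < A := Real.rpow_pos_of_pos hξ0 _
  have e1 : ξ ^ ((2⁻¹ : ℝ) - 1) = A * ξ ^ α := by
    rw [hA, ← Real.rpow_add hξ0]; congr 1; ring
  have e2 : ξ ^ (2⁻¹ : ℝ) * ξ ^ (α - 1) = A * (ξ ^ α * ξ ^ α) := by
    rw [hA, ← Real.rpow_add hξ0, ← Real.rpow_add hξ0, ← Real.rpow_add hξ0]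
    congr 1; ring
  have t1 : 2⁻¹ * ξ ^ ((2⁻¹ : ℝ) - 1) * qd α l ξ / (qd α l ξ) ^ 2
      = 2⁻¹ * ξ ^ ((2⁻¹ : ℝ) - 1) / qd α l ξ := by
    field_simp
  have step : (2⁻¹ * ξ ^ ((2⁻¹ : ℝ) - 1) * qd α l ξ +
        ξ ^ (2⁻¹ : ℝ) * ((α + 1) * (α * ξ ^ (α - 1)))) / (qd α l ξ) ^ 2
      ≤ 2⁻¹ * ξ ^ ((2⁻¹ : ℝ) - 1) / (K * ξ ^ α) +
        ξ ^ (2⁻¹ : ℝ) * ((α + 1) * (α * ξ ^ (α - 1))) / (K * ξ ^ α) ^ 2 := by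
    rw [add_div, t1]
    have b1 : 2⁻¹ * ξ ^ ((2⁻¹ : ℝ) - 1) / qd α l ξ
        ≤ 2⁻¹ * ξ ^ ((2⁻¹ : ℝ) - 1) / (K * ξ ^ α) := by
      apply div_le_div_of_nonneg_left _ hKξ hqge
      positivity
    have b2 : ξ ^ (2⁻¹ : ℝ) * ((α + 1) * (α * ξ ^ (α - 1))) / (qd α l ξ) ^ 2
        ≤ ξ ^ (2⁻¹ : ℝ) * ((α + 1) * (α * ξ ^ (α - 1))) / (K * ξ ^ α) ^ 2 := by
      apply div_le_div_of_nonneg_left h2 (by positivity)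
      exact pow_le_pow_left₀ hKξ.le hqge 2
    linarith
  refine step.trans (le_of_eq ?_)
  have final : 2⁻¹ * ξ ^ ((2⁻¹ : ℝ) - 1) / (K * ξ ^ α) +
        ξ ^ (2⁻¹ : ℝ) * ((α + 1) * (α * ξ ^ (α - 1))) / (K * ξ ^ α) ^ 2
      = (2⁻¹ / K + (α + 1) * α / K ^ 2) * A := by
    calc 2⁻¹ * ξ ^ ((2⁻¹ : ℝ) - 1) / (K * ξ ^ α) +
          ξ ^ (2⁻¹ : ℝ) * ((α + 1) * (α * ξ ^ (α - 1))) / (K * ξ ^ α) ^ 2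
        = 2⁻¹ * (A * ξ ^ α) / (K * ξ ^ α) +
          (α + 1) * α * (ξ ^ (2⁻¹ : ℝ) * ξ ^ (α - 1)) / (K * ξ ^ α) ^ 2 := by
          rw [e1]; ring
      _ = 2⁻¹ * (A * ξ ^ α) / (K * ξ ^ α) +
          (α + 1) * α * (A * (ξ ^ α * ξ ^ α)) / (K * ξ ^ α) ^ 2 := by rw [e2]
      _ = (2⁻¹ / K + (α + 1) * α / K ^ 2) * A := by
          field_simp
  rw [final]
  unfold Cb
  rw [← hKdef]

lemma norm_G_le {α c : ℝ} (hα : 0 < α) (hc : 0 < c) {L : ℝ}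
    (hL : -(α + 1) * c ^ α < L) {l ξ : ℝ} (hl : L ≤ l) (hξ : c ≤ ξ) :
    ‖G α l ξ‖ ≤ (Kc α c L)⁻¹ * ξ ^ ((2⁻¹ : ℝ) - α) := by
  set K := Kc α c L with hKdef
  have hK : 0 < K := Kc_pos hα hc hL
  have hξ0 : 0 < ξ := hc.trans_le hξ
  have hξα : 0 < ξ ^ α := Real.rpow_pos_of_pos hξ0 α
  have hqge : K * ξ ^ α ≤ qd α l ξ := qd_ge hα hc hL hl hξ
  have hq : 0 < qd α l ξ := lt_of_lt_of_le (mul_pos hK hξα) hqge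
  rw [norm_G, abs_div, abs_of_nonneg (Real.rpow_pos_of_pos hξ0 _).le, abs_of_pos hq]
  have hstep : ξ ^ (2⁻¹ : ℝ) / qd α l ξ ≤ ξ ^ (2⁻¹ : ℝ) / (K * ξ ^ α) := by
    apply div_le_div_of_nonneg_left _ (by positivity) hqge
    positivity
  refine hstep.trans (le_of_eq ?_)
  rw [Real.rpow_sub hξ0]
  field_simp

lemma continuousOn_f (α l c : ℝ) (hc : 0 < c) : ContinuousOn (f α l) (Ici c) := by
  have hne : ∀ ξ ∈ Ici c, ξ ≠ 0 ∨ (0:ℝ) ≤ (2⁻¹ : ℝ) := fun ξ _ => Or.inr (by norm_num)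
  have h1 : ContinuousOn (fun ξ : ℝ => ξ ^ (2⁻¹ : ℝ)) (Ici c) :=
    continuousOn_id.rpow_const hne
  have h2 : ContinuousOn (fun ξ : ℝ => ξ ^ (α + 1)) (Ici c) :=
    continuousOn_id.rpow_const fun ξ hξ => Or.inl (ne_of_gt (hc.trans_le hξ))
  have h3 : ContinuousOn (fun ξ : ℝ => l * ξ + ξ ^ (α + 1)) (Ici c) :=
    (continuousOn_const.mul continuousOn_id).add h2
  exact (Complex.continuous_ofReal.comp_continuousOn h1).mul
    (Complex.continuous_exp.comp_continuousOn
      (continuousOn_const.mul (Complex.continuous_ofReal.comp_continuousOn h3)))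

lemma continuousOn_psi (α l c : ℝ) (hc : 0 < c)
    (hq : ∀ ξ, c ≤ ξ → qd α l ξ ≠ 0) : ContinuousOn (psi α l) (Ici c) := by
  have hrpow : ∀ p : ℝ, ContinuousOn (fun ξ : ℝ => ξ ^ p) (Ici c) := fun p =>
    continuousOn_id.rpow_const fun ξ hξ => Or.inl (ne_of_gt (hc.trans_le hξ))
  have hqd : ContinuousOn (fun ξ => qd α l ξ) (Ici c) := by
    unfold qd; exact continuousOn_const.add (continuousOn_const.mul (hrpow α))
  have hrr : ContinuousOn (fun ξ => rr α l ξ) (Ici c) := by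
    unfold rr
    exact (((continuousOn_const.mul (hrpow _)).mul hqd).sub
      ((hrpow _).mul (continuousOn_const.mul (continuousOn_const.mul (hrpow _))))).div
      (hqd.pow 2) (fun ξ hξ => pow_ne_zero 2 (hq ξ hξ))
  have hphi : ContinuousOn (fun ξ => phi α l ξ) (Ici c) := by
    unfold phi
    exact (continuousOn_const.mul continuousOn_id).add (hrpow _)
  exact (continuousOn_const.mul (Complex.continuous_ofReal.comp_continuousOn hrr)).mul
    (Complex.continuous_exp.comp_continuousOn
      (continuousOn_const.mul (Complex.continuous_ofReal.comp_continuousOn hphi)))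

lemma hasDerivAt_G (α l : ℝ) {ξ : ℝ} (hξ : 0 < ξ) (hq : qd α l ξ ≠ 0) :
    HasDerivAt (G α l) (f α l ξ + psi α l ξ) ξ := by
  have hp : HasDerivAt (fun x : ℝ => x ^ (2⁻¹ : ℝ))
      (2⁻¹ * ξ ^ ((2⁻¹ : ℝ) - 1)) ξ :=
    Real.hasDerivAt_rpow_const (Or.inl hξ.ne')
  have hpowα : HasDerivAt (fun x : ℝ => x ^ α) (α * ξ ^ (α - 1)) ξ :=
    Real.hasDerivAt_rpow_const (Or.inl hξ.ne')
  have hq' : HasDerivAt (fun x => qd α l x) ((α + 1) * (α * ξ ^ (α - 1))) ξ := by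
    unfold qd
    exact (hpowα.const_mul (α + 1)).const_add l
  have hpow1 : HasDerivAt (fun x : ℝ => x ^ (α + 1)) ((α + 1) * ξ ^ α) ξ := by
    have := Real.hasDerivAt_rpow_const (x := ξ) (p := α + 1) (Or.inl hξ.ne')
    simpa using this
  have hphi : HasDerivAt (fun x => phi α l x) (qd α l ξ) ξ := by
    unfold phi qd
    have hlin : HasDerivAt (fun x : ℝ => l * x) l ξ := by
      simpa using (hasDerivAt_id ξ).const_mul l
    exact hlin.add hpow1
  have hE : HasDerivAt (fun x => Complex.exp (Complex.I * (phi α l x : ℂ)))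
      (Complex.exp (Complex.I * (phi α l ξ : ℂ)) * (Complex.I * (qd α l ξ : ℂ))) ξ :=
    (hphi.ofReal_comp.const_mul Complex.I).cexp
  have hu : HasDerivAt (fun x => x ^ (2⁻¹ : ℝ) / qd α l x) (rr α l ξ) ξ := by
    unfold rr
    exact hp.div hq' hq
  have hU : HasDerivAt (fun x => ((x ^ (2⁻¹ : ℝ) / qd α l x : ℝ) : ℂ))
      ((rr α l ξ : ℝ) : ℂ) ξ := hu.ofReal_comp
  have hG := (hU.const_mul (-Complex.I)).mul hE
  convert hG using 1
  · exact rfl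
  · exact rfl
  set E := Complex.exp (Complex.I * (phi α l ξ : ℂ)) with hE'
  set U := ((ξ ^ (2⁻¹ : ℝ) / qd α l ξ : ℝ) : ℂ) with hU'
  set Q := ((qd α l ξ : ℝ) : ℂ) with hQ'
  set P := ((ξ ^ (2⁻¹ : ℝ) : ℝ) : ℂ) with hP'
  have hQ0 : Q ≠ 0 := Complex.ofReal_ne_zero.mpr hq
  have huq : U * Q = P := by
    rw [hU', hQ', hP', ← Complex.ofReal_mul, div_mul_cancel₀ _ hq]
  have hfP : f α l ξ = P * E := by rw [f, hP', hE']; rfl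
  rw [hfP, psi]
  linear_combination E * huq.symm + U * Q * E * Complex.I_mul_I

lemma continuousAt_psi (α : ℝ) {l0 ξ : ℝ} (hq : qd α l0 ξ ≠ 0) :
    ContinuousAt (fun l => psi α l ξ) l0 := by
  have hqd : ContinuousAt (fun l => qd α l ξ) l0 := by
    unfold qd; fun_prop
  have hrr : ContinuousAt (fun l => rr α l ξ) l0 := by
    unfold rr
    exact ContinuousAt.div (by fun_prop) (hqd.pow 2) (pow_ne_zero 2 hq)
  have hphi : ContinuousAt (fun l => phi α l ξ) l0 := by
    unfold phi; fun_prop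
  exact (continuousAt_const.mul (Complex.continuous_ofReal.continuousAt.comp hrr)).mul
    (Complex.continuous_exp.continuousAt.comp
      (continuousAt_const.mul (Complex.continuous_ofReal.continuousAt.comp hphi)))

lemma continuousAt_G (α ξ : ℝ) {l0 : ℝ} (hq : qd α l0 ξ ≠ 0) :
    ContinuousAt (fun l => G α l ξ) l0 := by
  have hqd : ContinuousAt (fun l => qd α l ξ) l0 := by
    unfold qd; fun_prop
  have hdiv : ContinuousAt (fun l => ξ ^ (2⁻¹ : ℝ) / qd α l ξ) l0 :=
    ContinuousAt.div continuousAt_const hqd hq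
  have hphi : ContinuousAt (fun l => phi α l ξ) l0 := by
    unfold phi; fun_prop
  exact (continuousAt_const.mul (Complex.continuous_ofReal.continuousAt.comp hdiv)).mul
    (Complex.continuous_exp.continuousAt.comp
      (continuousAt_const.mul (Complex.continuous_ofReal.continuousAt.comp hphi)))

end OscTailAux

open OscTailAux

/-- For `α > 1/2` and `c > 0`, the improper Riemann integral
`lim_{R→∞} ∫_c^R ξ^{1/2} e^{i(λξ + ξ^{α+1})} dξ` exists for every `λ > -(α+1)c^α`,
and defines a continuous function of `λ` on `{λ : λ > -(α+1)c^α}`. -/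
theorem oscillatory_tail_exists_continuous (α c : ℝ) (hα : 1 / 2 < α) (hc : 0 < c) :
    ∃ h : ℝ → ℂ,
      (∀ l : ℝ, -(α + 1) * c ^ α < l →
        Tendsto
          (fun R : ℝ => ∫ ξ in c..R,
            ((ξ ^ (2⁻¹ : ℝ) : ℝ) : ℂ) *
              Complex.exp (Complex.I * ((l * ξ + ξ ^ (α + 1) : ℝ) : ℂ)))
          atTop (nhds (h l))) ∧
      ContinuousOn h {l : ℝ | -(α + 1) * c ^ α < l} := by
  have hα0 : 0 < α := lt_trans (by norm_num) hα
  have hexp : ((2⁻¹ : ℝ) - 1 - α) < -1 := by linarith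
  -- integrability of psi for any l in the set, uniformly below
  have hint : ∀ L : ℝ, -(α + 1) * c ^ α < L → ∀ l : ℝ, L ≤ l →
      -(α + 1) * c ^ α < l → IntegrableOn (psi α l) (Ioi c) := by
    intro L hL l hl hl'
    have hbound : Integrable (fun ξ => Cb α c L * ξ ^ ((2⁻¹ : ℝ) - 1 - α))
        (volume.restrict (Ioi c)) :=
      (integrableOn_Ioi_rpow_of_lt hexp hc).const_mul _
    refine Integrable.mono' hbound ?_ ?_
    · exact ((continuousOn_psi α l c hc fun ξ hξ =>
        (qd_pos hα0 hc hl' hξ).ne').mono Ioi_subset_Ici_self).aestronglyMeasurable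
        measurableSet_Ioi
    · refine (ae_restrict_iff' measurableSet_Ioi).2 (ae_of_all _ fun ξ hξ => ?_)
      exact psi_bound hα0 hc hL hl (le_of_lt hξ)
  refine ⟨fun l => -G α l c - ∫ ξ in Ioi c, psi α l ξ, ?_, ?_⟩
  · -- convergence
    intro l hl
    have hqpos : ∀ ξ, c ≤ ξ → 0 < qd α l ξ := fun ξ hξ => qd_pos hα0 hc hl hξ
    have hpsiInt : IntegrableOn (psi α l) (Ioi c) := hint l hl l le_rfl hl
    -- the integration by parts identity for R ≥ c
    have key : ∀ R : ℝ, c ≤ R →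
        (∫ ξ in c..R, f α l ξ) = G α l R - G α l c - ∫ ξ in c..R, psi α l ξ := by
      intro R hR
      have huIcc : uIcc c R = Icc c R := uIcc_of_le hR
      have hsub : Icc c R ⊆ Ici c := Icc_subset_Ici_self
      have hfc : ContinuousOn (f α l) (uIcc c R) :=
        (continuousOn_f α l c hc).mono (huIcc ▸ hsub)
      have hpc : ContinuousOn (psi α l) (uIcc c R) :=
        ((continuousOn_psi α l c hc fun ξ hξ => (hqpos ξ hξ).ne').mono
          (huIcc ▸ hsub))
      have hderiv : ∀ x ∈ uIcc c R, HasDerivAt (G α l) (f α l x + psi α l x) x := by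
        intro x hx
        rw [huIcc] at hx
        exact hasDerivAt_G α l (hc.trans_le hx.1) (hqpos x hx.1).ne'
      have hii : IntervalIntegrable (fun x => f α l x + psi α l x) volume c R :=
        (hfc.add hpc).intervalIntegrable
      have := intervalIntegral.integral_eq_sub_of_hasDerivAt hderiv hii
      rw [intervalIntegral.integral_add hfc.intervalIntegrable
        hpc.intervalIntegrable] at this
      linear_combination this
    -- limits of the pieces
    have hGt : Tendsto (fun R => G α l R) atTop (nhds 0) := by
      have hmaj : Tendsto (fun R : ℝ => (Kc α c l)⁻¹ * R ^ ((2⁻¹ : ℝ) - α)) atTop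
          (nhds 0) := by
        have : Tendsto (fun R : ℝ => R ^ (-(α - (2⁻¹ : ℝ)))) atTop (nhds 0) :=
          tendsto_rpow_neg_atTop (by linarith)
        have h2 := this.const_mul ((Kc α c l)⁻¹)
        simpa [neg_sub] using h2
      refine squeeze_zero_norm' ?_ hmaj
      filter_upwards [eventually_ge_atTop c] with R hR
      exact norm_G_le hα0 hc hl le_rfl hR
    have hIt : Tendsto (fun R => ∫ ξ in c..R, psi α l ξ) atTop
        (nhds (∫ ξ in Ioi c, psi α l ξ)) :=
      intervalIntegral_tendsto_integral_Ioi c hpsiInt tendsto_id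
    have hcomb : Tendsto (fun R => G α l R - G α l c - ∫ ξ in c..R, psi α l ξ) atTop
        (nhds (-G α l c - ∫ ξ in Ioi c, psi α l ξ)) := by
      have := (hGt.sub (tendsto_const_nhds (x := G α l c))).sub hIt
      simpa using this
    refine hcomb.congr' ?_
    filter_upwards [eventually_ge_atTop c] with R hR
    exact (key R hR).symm
  · -- continuity
    refine fun l0 hl0 => (ContinuousAt.continuousWithinAt ?_)
    have hl0' : -(α + 1) * c ^ α < l0 := hl0
    set L : ℝ := (l0 + -(α + 1) * c ^ α) / 2 with hLdef
    have hL : -(α + 1) * c ^ α < L := by rw [hLdef]; linarith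
    have hLl0 : L < l0 := by rw [hLdef]; linarith
    have hmem : Ioi L ∈ nhds l0 := Ioi_mem_nhds hLl0
    have hcont1 : ContinuousAt (fun l => -G α l c) l0 :=
      (continuousAt_G α c (qd_pos hα0 hc hl0' le_rfl).ne').neg
    have hcont2 : ContinuousAt (fun l => ∫ ξ in Ioi c, psi α l ξ) l0 := by
      refine continuousAt_of_dominated ?_ ?_
        ((integrableOn_Ioi_rpow_of_lt hexp hc).const_mul (Cb α c L)) ?_
      · filter_upwards [hmem] with l hl
        have hl' : -(α + 1) * c ^ α < l := lt_trans hL hl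
        exact ((continuousOn_psi α l c hc fun ξ hξ =>
          (qd_pos hα0 hc hl' hξ).ne').mono Ioi_subset_Ici_self).aestronglyMeasurable
          measurableSet_Ioi
      · filter_upwards [hmem] with l hl
        refine (ae_restrict_iff' measurableSet_Ioi).2 (ae_of_all _ fun ξ hξ => ?_)
        exact psi_bound hα0 hc hL (le_of_lt hl) (le_of_lt hξ)
      · refine (ae_restrict_iff' measurableSet_Ioi).2 (ae_of_all _ fun ξ hξ => ?_)
        exact continuousAt_psi α (qd_pos hα0 hc hl0' (le_of_lt hξ)).ne'
    exact hcont1.sub hcont2
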